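/- If the tag system T produces ζ from ξ in one step (ξ ↦_T ζ), then for all A ∈ ͞ξ and B ∈ ͞ζ one has P_T ⊢ A ⇒ B: there exist formulas C₀ = A, C₁, …, C_n = B (n ≥ 0) with P_T ⊢ C_i → C_{i+1} for all 0 ≤ i ≤ n−1. -/

import Mathlib

namespace PC

/-- `{→}`-formulas over a countably infinite set of propositional variables. -/
inductive Fml : Type where
  | var : ℕ → Fml
  | imp : Fml → Fml → Fml
deriving DecidableEq

namespace Fml

/-- Application of a substitution to a formula. -/
def subst (σ : ℕ → Fml) : Fml → Fml
  | var n => σ n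
  | imp A B => imp (subst σ A) (subst σ B)

/-- The set of variables of a formula. -/
def fvars : Fml → Finset ℕ
  | var n => {n}
  | imp A B => fvars A ∪ fvars B

/-- Derivability from a set of axioms by modus ponens and substitution. -/
inductive Deriv (P : Set Fml) : Fml → Prop
  | ax {A : Fml} : A ∈ P → Deriv P A
  | mp {A B : Fml} : Deriv P A → Deriv P (imp A B) → Deriv P B
  | sub {A : Fml} (σ : ℕ → Fml) : Deriv P A → Deriv P (subst σ A)

end Fml

/-- `B̂`: the result of substituting `B` for the variable `x` (= `var 0`) in `x̂`. -/
def hat (xhat B : Fml) : Fml := Fml.subst (fun n => if n = 0 then B else Fml.var n) xhat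

/-- `A ∘ B := ((B̂ → B̂) → B̂) → (Â → ((B̂ → B̂) → B̂))`. -/
def circ (xhat A B : Fml) : Fml :=
  .imp (.imp (.imp (hat xhat B) (hat xhat B)) (hat xhat B))
    (.imp (hat xhat A) (.imp (.imp (hat xhat B) (hat xhat B)) (hat xhat B)))

/-- `A · B := ((A → A) → A) ∘ B`. -/
def dot (xhat A B : Fml) : Fml := circ xhat (.imp (.imp A A) A) B

/-- `Cform i` is the formula `p → (p → … (p → p))` with `i` antecedents `p`,
where `p := var 0`. -/
def Cform : ℕ → Fml
  | 0 => .var 0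
  | n + 1 => .imp (.var 0) (Cform n)

/-- The code of the letter `aᵢ` (letters of the alphabet `𝒜 = {a₁, …, a_m}` are the
elements of `Fin m`, the letter `a : Fin m` standing for `a_{a+1}`): `Cᵢ ∘ p`. -/
def letterCode (xhat : Fml) {m : ℕ} (a : Fin m) : Fml :=
  circ xhat (Cform (a.val + 1)) (.var 0)

/-- Formal alphabetic-formula trees over the alphabet `Fin m`. -/
inductive ATree (m : ℕ) : Type where
  | leaf : Fin m → ATree m
  | node : ATree m → ATree m → ATree m

/-- The word associated with an alphabetic formula. -/
def ATree.word {m : ℕ} : ATree m → List (Fin m)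
  | .leaf a => [a]
  | .node l r => l.word ++ r.word

/-- The `{→}`-formula denoted by an alphabetic-formula tree. -/
def ATree.toFml {m : ℕ} (xhat : Fml) : ATree m → Fml
  | .leaf a => letterCode xhat a
  | .node l r => dot xhat (l.toFml xhat) (r.toFml xhat)

/-- `A` is an alphabetic formula (an `𝒜`-formula). -/
def IsAForm (m : ℕ) (xhat : Fml) (A : Fml) : Prop := ∃ t : ATree m, t.toFml xhat = A

/-- The code `͞α` of a word `α`: the set of all `𝒜`-formulas `A` with `word(A) = α`. -/
def codeSet {m : ℕ} (xhat : Fml) (α : List (Fin m)) : Set Fml :=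
  { A | ∃ t : ATree m, t.word = α ∧ t.toFml xhat = A }

/-- `A*`: the set of substitution instances of `A`. -/
def Inst (A : Fml) : Set Fml := { B | ∃ σ, Fml.subst σ A = B }

/-- `M*`: the set of substitution instances of members of `M`. -/
def InstSet (M : Set Fml) : Set Fml := { B | ∃ A ∈ M, ∃ σ, Fml.subst σ A = B }

/-- A tag system over the alphabet `Fin m`: the words `ω₁, …, ω_m` and the
deletion number `d`. -/
structure TagSystem (m : ℕ) where
  W : Fin m → List (Fin m)
  d : ℕ

/-- One-step production: `ξ ↦_T ζ` iff `ξ = aᵢβγ` with `|β| = d − 1` and `ζ = γωᵢ`. -/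
def TagStep {m : ℕ} (T : TagSystem m) (ξ ζ : List (Fin m)) : Prop :=
  ∃ (i : Fin m) (β γ : List (Fin m)),
    β.length = T.d - 1 ∧ ξ = i :: (β ++ γ) ∧ ζ = γ ++ T.W i

/-- `ξ ⟾_T ζ`: reflexive-transitive closure of one-step production. -/
def TagProd {m : ℕ} (T : TagSystem m) : List (Fin m) → List (Fin m) → Prop :=
  Relation.ReflTransGen (TagStep T)

/-- `T` halts on `ξ`. -/
def TagHalts {m : ℕ} (T : TagSystem m) (ξ : List (Fin m)) : Prop :=
  ∃ ζ, TagProd T ξ ζ ∧ ζ.length < T.d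

/-- The variables `x, y, z, u` used in the axiom schemes. -/
def Xv : Fml := .var 1
def Yv : Fml := .var 2
def Zv : Fml := .var 3
def Uv : Fml := .var 4

/-- The axioms (R₁)–(R₄). -/
def Raxioms (xhat : Fml) : Set Fml :=
  { .imp (dot xhat Xv (dot xhat Yv Zv)) (dot xhat (dot xhat Xv Yv) Zv),
    .imp (dot xhat (dot xhat Xv Yv) Zv) (dot xhat Xv (dot xhat Yv Zv)),
    .imp (dot xhat (dot xhat Xv (dot xhat Yv Zv)) Uv)
      (dot xhat (dot xhat (dot xhat Xv Yv) Zv) Uv),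
    .imp (dot xhat (dot xhat (dot xhat Xv Yv) Zv) Uv)
      (dot xhat (dot xhat Xv (dot xhat Yv Zv)) Uv) }

/-- The axioms (T₁) and (T₂) of `P_T`. -/
def Taxioms {m : ℕ} (xhat : Fml) (T : TagSystem m) : Set Fml :=
  { F | ∃ (i : Fin m) (α : List (Fin m)) (A B : Fml),
      α.length = T.d - 1 ∧ A ∈ codeSet xhat (i :: α) ∧ B ∈ codeSet xhat (T.W i) ∧
      (F = .imp (dot xhat A Xv) (dot xhat Xv B) ∨ F = .imp A B) }

/-- The calculus `P_T`. -/
def PT {m : ℕ} (xhat : Fml) (T : TagSystem m) : Set Fml := Taxioms xhat T ∪ Raxioms xhat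

/-- `P ⊢ A ⇒ B`: there are `C₀ = A, …, C_n = B` with `P ⊢ Cᵢ → Cᵢ₊₁` for all `i`. -/
def DChain (P : Set Fml) : Fml → Fml → Prop :=
  Relation.ReflTransGen (fun C D => Fml.Deriv P (.imp C D))

/-- `T_α`: the set of `𝒜`-formulas `A` with `α ⟾_T word(A)`. -/
def Tset {m : ℕ} (xhat : Fml) (T : TagSystem m) (α : List (Fin m)) : Set Fml :=
  { A | ∃ t : ATree m, t.toFml xhat = A ∧ TagProd T α t.word }

/-- The halting-condition axioms (H) for the calculus `P₀`. -/
def Haxioms {m : ℕ} (xhat : Fml) (T : TagSystem m) (P₀ : Finset Fml) : Set Fml :=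
  { F | ∃ (α : List (Fin m)) (A B : Fml), α ≠ [] ∧ α.length < T.d ∧
      A ∈ codeSet xhat α ∧ B ∈ P₀ ∧ F = .imp A B }

/-- The calculus `P_{T,P₀}`. -/
def PTP0 {m : ℕ} (xhat : Fml) (T : TagSystem m) (P₀ : Finset Fml) : Set Fml :=
  PT xhat T ∪ Haxioms xhat T P₀

/-- The calculus `P_{T,P₀,ξ}`. -/
def PTP0xi {m : ℕ} (xhat : Fml) (T : TagSystem m) (P₀ : Finset Fml)
    (ξ : List (Fin m)) : Set Fml :=
  PT xhat T ∪ Haxioms xhat T P₀ ∪ codeSet xhat ξ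

/-- `⟨P⟩`: formulas obtained from `P` by one application of modus ponens or
substitution. -/
def stepOnce (P : Set Fml) : Set Fml :=
  { B | ∃ A, A ∈ P ∧ Fml.imp A B ∈ P } ∪ { B | ∃ A ∈ P, ∃ σ, Fml.subst σ A = B }

/-- `⟨P⟩_n`. -/
def stepIter (P : Set Fml) : ℕ → Set Fml
  | 0 => P
  | n + 1 => stepOnce (stepIter P n)

/-- The single axiom `x → (y → x)`. -/
def Kax : Fml := .imp (.var 0) (.imp (.var 1) (.var 0))

/-- An effective encoding of `{→}`-formulas as natural numbers. -/
def encFml : Fml → ℕ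
  | .var n => Nat.pair 0 n
  | .imp A B => Nat.pair 1 (Nat.pair (encFml A) (encFml B))

/-- The fixed effective encoding of `{→}`-calculi (finite sets of formulas)
as natural numbers. -/
def encCalc (P : Finset Fml) : ℕ :=
  Encodable.encode ((P.image encFml).sort (· ≤ ·))



section Aux

lemma subst_var (σ : ℕ → Fml) (n : ℕ) : Fml.subst σ (.var n) = σ n := rfl

lemma subst_imp (σ : ℕ → Fml) (A B : Fml) :
    Fml.subst σ (.imp A B) = .imp (Fml.subst σ A) (Fml.subst σ B) := rfl

lemma subst_subst (σ τ : ℕ → Fml) (A : Fml) :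
    Fml.subst σ (Fml.subst τ A) = Fml.subst (fun n => Fml.subst σ (τ n)) A := by
  induction A with
  | var n => rfl
  | imp A B ihA ihB => simp [Fml.subst, ihA, ihB]

lemma subst_congr {σ σ' : ℕ → Fml} {A : Fml} (h : ∀ n ∈ A.fvars, σ n = σ' n) :
    Fml.subst σ A = Fml.subst σ' A := by
  induction A with
  | var n => exact h n (by simp [Fml.fvars])
  | imp A B ihA ihB =>
    simp only [Fml.subst, Fml.imp.injEq]
    exact ⟨ihA fun n hn => h n (by simp [Fml.fvars, hn]),
      ihB fun n hn => h n (by simp [Fml.fvars, hn])⟩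

lemma subst_id (A : Fml) : Fml.subst (fun n => Fml.var n) A = A := by
  induction A with
  | var n => rfl
  | imp A B ihA ihB => simp [Fml.subst, ihA, ihB]

lemma subst_fix {σ : ℕ → Fml} {A : Fml} (h : ∀ n ∈ A.fvars, σ n = Fml.var n) :
    Fml.subst σ A = A := (subst_congr h).trans (subst_id A)

lemma fvars_subst_subset (σ : ℕ → Fml) (A : Fml) :
    (Fml.subst σ A).fvars ⊆ A.fvars.biUnion fun n => (σ n).fvars := by
  induction A with
  | var n => intro k hk; simp [Fml.fvars]; exact hk
  | imp A B ihA ihB =>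
    intro k hk
    simp only [Fml.subst, Fml.fvars, Finset.mem_union] at hk
    simp only [Fml.fvars]
    rw [Finset.mem_biUnion]
    rcases hk with hk | hk
    · obtain ⟨n, hn, h2⟩ := Finset.mem_biUnion.mp (ihA hk)
      exact ⟨n, Finset.mem_union_left _ hn, h2⟩
    · obtain ⟨n, hn, h2⟩ := Finset.mem_biUnion.mp (ihB hk)
      exact ⟨n, Finset.mem_union_right _ hn, h2⟩

lemma hat_subst (xhat : Fml) (hx : xhat.fvars = {0}) (σ : ℕ → Fml) (B : Fml) :
    Fml.subst σ (hat xhat B) = hat xhat (Fml.subst σ B) := by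
  unfold hat
  rw [subst_subst]
  apply subst_congr
  intro n hn
  rw [hx] at hn
  simp at hn
  subst hn
  simp

lemma circ_subst (xhat : Fml) (hx : xhat.fvars = {0}) (σ : ℕ → Fml) (A B : Fml) :
    Fml.subst σ (circ xhat A B) = circ xhat (Fml.subst σ A) (Fml.subst σ B) := by
  simp only [circ, subst_imp, hat_subst xhat hx]

lemma dot_subst (xhat : Fml) (hx : xhat.fvars = {0}) (σ : ℕ → Fml) (A B : Fml) :
    Fml.subst σ (dot xhat A B) = dot xhat (Fml.subst σ A) (Fml.subst σ B) := by
  simp only [dot, circ_subst xhat hx, subst_imp]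

lemma fvars_hat_subset (xhat : Fml) (hx : xhat.fvars = {0}) (B : Fml) :
    (hat xhat B).fvars ⊆ B.fvars := by
  intro n hn
  have h := fvars_subst_subset _ _ hn
  rw [hx] at h
  simpa using h

lemma fvars_circ_subset (xhat : Fml) (hx : xhat.fvars = {0}) (A B : Fml) :
    (circ xhat A B).fvars ⊆ A.fvars ∪ B.fvars := by
  have hA := fvars_hat_subset xhat hx A
  have hB := fvars_hat_subset xhat hx B
  intro n hn
  have hA' := @hA n
  have hB' := @hB n
  simp only [circ, Fml.fvars, Finset.mem_union] at hn ⊢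
  tauto

lemma fvars_dot_subset (xhat : Fml) (hx : xhat.fvars = {0}) (A B : Fml) :
    (dot xhat A B).fvars ⊆ A.fvars ∪ B.fvars := by
  intro n hn
  have h := fvars_circ_subset xhat hx (.imp (.imp A A) A) B hn
  simp only [Fml.fvars, Finset.mem_union] at h ⊢
  tauto

lemma fvars_Cform (k : ℕ) : (Cform k).fvars ⊆ {0} := by
  induction k with
  | zero => simp [Cform, Fml.fvars]
  | succ n ih =>
    intro x hx
    simp only [Cform, Fml.fvars, Finset.mem_union] at hx
    rcases hx with hx | hx
    · simpa using hx
    · exact ih hx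

lemma fvars_toFml (xhat : Fml) (hx : xhat.fvars = {0}) {m : ℕ} (t : ATree m) :
    (t.toFml xhat).fvars ⊆ {0} := by
  induction t with
  | leaf a =>
    intro n hn
    have h := fvars_circ_subset xhat hx (Cform (a.val + 1)) (.var 0) hn
    simp only [Finset.mem_union] at h
    rcases h with h | h
    · exact fvars_Cform _ h
    · simpa [Fml.fvars] using h
  | node l r ihl ihr =>
    intro n hn
    have h := fvars_dot_subset xhat hx _ _ hn
    simp only [Finset.mem_union] at h
    rcases h with h | h
    · exact ihl h
    · exact ihr h

/-- Substitution used to instantiate the R-axioms. -/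
def σ4 (X Y Z U : Fml) : ℕ → Fml := fun n =>
  if n = 1 then X else if n = 2 then Y else if n = 3 then Z else if n = 4 then U else .var n

lemma deriv_R1 (xhat : Fml) (hx : xhat.fvars = {0}) {m : ℕ} (T : TagSystem m)
    (X Y Z : Fml) :
    Fml.Deriv (PT xhat T)
      (.imp (dot xhat X (dot xhat Y Z)) (dot xhat (dot xhat X Y) Z)) := by
  have hmem : (Fml.imp (dot xhat Xv (dot xhat Yv Zv)) (dot xhat (dot xhat Xv Yv) Zv)) ∈
      PT xhat T := Set.mem_union_right _ (by simp [Raxioms])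
  have h := Fml.Deriv.sub (σ4 X Y Z Z) (Fml.Deriv.ax hmem)
  simp only [subst_imp, dot_subst xhat hx, Xv, Yv, Zv, subst_var] at h
  simpa [σ4] using h

lemma deriv_R2 (xhat : Fml) (hx : xhat.fvars = {0}) {m : ℕ} (T : TagSystem m)
    (X Y Z : Fml) :
    Fml.Deriv (PT xhat T)
      (.imp (dot xhat (dot xhat X Y) Z) (dot xhat X (dot xhat Y Z))) := by
  have hmem : (Fml.imp (dot xhat (dot xhat Xv Yv) Zv) (dot xhat Xv (dot xhat Yv Zv))) ∈
      PT xhat T := Set.mem_union_right _ (by simp [Raxioms])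
  have h := Fml.Deriv.sub (σ4 X Y Z Z) (Fml.Deriv.ax hmem)
  simp only [subst_imp, dot_subst xhat hx, Xv, Yv, Zv, subst_var] at h
  simpa [σ4] using h

lemma deriv_R3 (xhat : Fml) (hx : xhat.fvars = {0}) {m : ℕ} (T : TagSystem m)
    (X Y Z U : Fml) :
    Fml.Deriv (PT xhat T)
      (.imp (dot xhat (dot xhat X (dot xhat Y Z)) U)
        (dot xhat (dot xhat (dot xhat X Y) Z) U)) := by
  have hmem : (Fml.imp (dot xhat (dot xhat Xv (dot xhat Yv Zv)) Uv)
      (dot xhat (dot xhat (dot xhat Xv Yv) Zv) Uv)) ∈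
      PT xhat T := Set.mem_union_right _ (by simp [Raxioms])
  have h := Fml.Deriv.sub (σ4 X Y Z U) (Fml.Deriv.ax hmem)
  simp only [subst_imp, dot_subst xhat hx, Xv, Yv, Zv, Uv, subst_var] at h
  simpa [σ4] using h

lemma deriv_R4 (xhat : Fml) (hx : xhat.fvars = {0}) {m : ℕ} (T : TagSystem m)
    (X Y Z U : Fml) :
    Fml.Deriv (PT xhat T)
      (.imp (dot xhat (dot xhat (dot xhat X Y) Z) U)
        (dot xhat (dot xhat X (dot xhat Y Z)) U)) := by
  have hmem : (Fml.imp (dot xhat (dot xhat (dot xhat Xv Yv) Zv) Uv)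
      (dot xhat (dot xhat Xv (dot xhat Yv Zv)) Uv)) ∈
      PT xhat T := Set.mem_union_right _ (by simp [Raxioms])
  have h := Fml.Deriv.sub (σ4 X Y Z U) (Fml.Deriv.ax hmem)
  simp only [subst_imp, dot_subst xhat hx, Xv, Yv, Zv, Uv, subst_var] at h
  simpa [σ4] using h

/-- Spine rewriting steps on alphabetic trees. -/
inductive SpStep {m : ℕ} : ATree m → ATree m → Prop
  | assoc (x y z : ATree m) : SpStep (.node x (.node y z)) (.node (.node x y) z)
  | assoc' (x y z : ATree m) : SpStep (.node (.node x y) z) (.node x (.node y z))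
  | left {l l' : ATree m} (r : ATree m) : SpStep l l' → SpStep (.node l r) (.node l' r)

def SpRel {m : ℕ} : ATree m → ATree m → Prop := Relation.ReflTransGen SpStep

lemma spstep_symm {m : ℕ} {s t : ATree m} (h : SpStep s t) : SpStep t s := by
  induction h with
  | assoc x y z => exact SpStep.assoc' x y z
  | assoc' x y z => exact SpStep.assoc x y z
  | left r _ ih => exact SpStep.left r ih

lemma spstep_ctx (xhat : Fml) (hx : xhat.fvars = {0}) {m : ℕ} (T : TagSystem m)
    {s t : ATree m} (h : SpStep s t) :
    ∀ r : ATree m, DChain (PT xhat T) ((ATree.node s r).toFml xhat)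
      ((ATree.node t r).toFml xhat) := by
  induction h with
  | assoc x y z =>
    intro r
    exact Relation.ReflTransGen.single
      (deriv_R3 xhat hx T (x.toFml xhat) (y.toFml xhat) (z.toFml xhat) (r.toFml xhat))
  | assoc' x y z =>
    intro r
    exact Relation.ReflTransGen.single
      (deriv_R4 xhat hx T (x.toFml xhat) (y.toFml xhat) (z.toFml xhat) (r.toFml xhat))
  | @left l l' r hll ih =>
    intro r2
    have h1 : DChain (PT xhat T) ((ATree.node (ATree.node l r) r2).toFml xhat)
        ((ATree.node l (ATree.node r r2)).toFml xhat) :=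
      Relation.ReflTransGen.single
        (deriv_R2 xhat hx T (l.toFml xhat) (r.toFml xhat) (r2.toFml xhat))
    have h2 := ih (ATree.node r r2)
    have h3 : DChain (PT xhat T) ((ATree.node l' (ATree.node r r2)).toFml xhat)
        ((ATree.node (ATree.node l' r) r2).toFml xhat) :=
      Relation.ReflTransGen.single
        (deriv_R1 xhat hx T (l'.toFml xhat) (r.toFml xhat) (r2.toFml xhat))
    exact h1.trans (h2.trans h3)

lemma spstep_chain (xhat : Fml) (hx : xhat.fvars = {0}) {m : ℕ} (T : TagSystem m)
    {s t : ATree m} (h : SpStep s t) :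
    DChain (PT xhat T) (s.toFml xhat) (t.toFml xhat) := by
  cases h with
  | assoc x y z =>
    exact Relation.ReflTransGen.single
      (deriv_R1 xhat hx T (x.toFml xhat) (y.toFml xhat) (z.toFml xhat))
  | assoc' x y z =>
    exact Relation.ReflTransGen.single
      (deriv_R2 xhat hx T (x.toFml xhat) (y.toFml xhat) (z.toFml xhat))
  | left r hll => exact spstep_ctx xhat hx T hll r

lemma sprel_chain (xhat : Fml) (hx : xhat.fvars = {0}) {m : ℕ} (T : TagSystem m)
    {s t : ATree m} (h : SpRel s t) :
    DChain (PT xhat T) (s.toFml xhat) (t.toFml xhat) := by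
  induction h with
  | refl => exact Relation.ReflTransGen.refl
  | tail _ hst ih => exact ih.trans (spstep_chain xhat hx T hst)

lemma sprel_node_left {m : ℕ} {s t : ATree m} (h : SpRel s t) (r : ATree m) :
    SpRel (ATree.node s r) (ATree.node t r) := by
  induction h with
  | refl => exact Relation.ReflTransGen.refl
  | tail _ hst ih => exact ih.tail (SpStep.left r hst)

/-- Attach a list of letters along the left spine. -/
def spine {m : ℕ} (c : ATree m) (w : List (Fin m)) : ATree m :=
  w.foldl (fun a b => ATree.node a (ATree.leaf b)) c

lemma spine_word {m : ℕ} (w : List (Fin m)) (c : ATree m) :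
    (spine c w).word = c.word ++ w := by
  induction w generalizing c with
  | nil => simp [spine]
  | cons a w ih =>
    simp only [spine, List.foldl_cons]
    rw [show (List.foldl (fun a b => ATree.node a (ATree.leaf b))
      (ATree.node c (ATree.leaf a)) w) = spine (ATree.node c (ATree.leaf a)) w from rfl, ih]
    simp [ATree.word]

lemma spine_append {m : ℕ} (c : ATree m) (w₁ w₂ : List (Fin m)) :
    spine (spine c w₁) w₂ = spine c (w₁ ++ w₂) := by
  simp [spine, List.foldl_append]

lemma sprel_spine {m : ℕ} {s t : ATree m} (h : SpRel s t) (w : List (Fin m)) :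
    SpRel (spine s w) (spine t w) := by
  induction w generalizing s t with
  | nil => exact h
  | cons a w ih =>
    simp only [spine, List.foldl_cons]
    exact ih (sprel_node_left h (ATree.leaf a))

lemma sprel_flatten_right {m : ℕ} (r : ATree m) :
    ∀ l : ATree m, SpRel (ATree.node l r) (spine l r.word) := by
  induction r with
  | leaf a => intro l; exact Relation.ReflTransGen.refl
  | node r1 r2 ih1 ih2 =>
    intro l
    have h1 : SpRel (ATree.node l (ATree.node r1 r2)) (ATree.node (ATree.node l r1) r2) :=
      Relation.ReflTransGen.single (SpStep.assoc l r1 r2)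
    have h2 := ih2 (ATree.node l r1)
    have h3 : SpRel (spine (ATree.node l r1) r2.word)
        (spine (spine l r1.word) r2.word) := sprel_spine (ih1 l) r2.word
    have h4 : spine (spine l r1.word) r2.word = spine l (ATree.node r1 r2).word := by
      rw [spine_append]; rfl
    rw [h4] at h3
    exact h1.trans (h2.trans h3)

/-- The left-comb flattening of a tree. -/
def flat {m : ℕ} : ATree m → ATree m
  | .leaf a => .leaf a
  | .node l r => spine (flat l) r.word

lemma sprel_flat {m : ℕ} (t : ATree m) : SpRel t (flat t) := by
  induction t with
  | leaf a => exact Relation.ReflTransGen.refl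
  | node l r ihl ihr =>
    have h1 := sprel_flatten_right r l
    have h2 : SpRel (spine l r.word) (spine (flat l) r.word) := sprel_spine ihl r.word
    exact h1.trans h2

lemma word_ne_nil {m : ℕ} (t : ATree m) : t.word ≠ [] := by
  induction t with
  | leaf a => simp [ATree.word]
  | node l r ihl ihr => simp only [ATree.word]; simp [ihl]

lemma flat_eq_spine {m : ℕ} : ∀ (t : ATree m) (c : Fin m) (w : List (Fin m)),
    t.word = c :: w → flat t = spine (ATree.leaf c) w := by
  intro t
  induction t with
  | leaf a =>
    intro c w h
    simp only [ATree.word] at h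
    obtain ⟨rfl, rfl⟩ : a = c ∧ w = [] := by
      cases h; exact ⟨rfl, rfl⟩
    rfl
  | node l r ihl ihr =>
    intro c w h
    simp only [ATree.word] at h
    obtain ⟨c', w1, hlw⟩ : ∃ c' w1, l.word = c' :: w1 := by
      cases hl2 : l.word with
      | nil => exact absurd hl2 (word_ne_nil l)
      | cons a b => exact ⟨a, b, rfl⟩
    rw [hlw] at h
    simp only [List.cons_append, List.cons.injEq] at h
    obtain ⟨rfl, rfl⟩ := h
    show spine (flat l) r.word = _
    rw [ihl c' w1 hlw, spine_append]

lemma sprel_of_word_eq {m : ℕ} {t₁ t₂ : ATree m} (h : t₁.word = t₂.word) :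
    SpRel t₁ t₂ := by
  have hsymm : Symmetric (@SpStep m) := fun _ _ h => spstep_symm h
  cases hw : t₁.word with
  | nil => exact absurd hw (word_ne_nil t₁)
  | cons c w =>
    have h1 := sprel_flat t₁
    have h2 := sprel_flat t₂
    rw [flat_eq_spine t₁ c w hw, flat_eq_spine t₂ c w (by rw [← h, hw])] at *
    exact h1.trans ((@Relation.ReflTransGen.stdSymm _ _ ⟨fun _ _ h => hsymm h⟩).symm _ _ h2)

lemma exists_tree {m : ℕ} (l : List (Fin m)) (h : l ≠ []) :
    ∃ t : ATree m, t.word = l := by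
  cases l with
  | nil => exact absurd rfl h
  | cons c w =>
    exact ⟨spine (ATree.leaf c) w, by rw [spine_word]; rfl⟩

end Aux

/-- If the tag system `T` produces `ζ` from `ξ` in one step
(`ξ ↦_T ζ`), then for all `A ∈ ͞ξ` and `B ∈ ͞ζ` one has `P_T ⊢ A ⇒ B`. -/
theorem PT_chain_of_step (xhat : Fml) (hx : xhat.fvars = {0})
    (m : ℕ) (T : TagSystem m) (hW : ∀ i, T.W i ≠ [])
    (ξ ζ : List (Fin m)) (hstep : TagStep T ξ ζ)
    (A B : Fml) (hA : A ∈ codeSet xhat ξ) (hB : B ∈ codeSet xhat ζ) :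
    DChain (PT xhat T) A B := by
  obtain ⟨i, β, γ, hβ, hξ, hζ⟩ := hstep
  obtain ⟨tA, hwA, hfA⟩ := hA
  obtain ⟨tB, hwB, hfB⟩ := hB
  obtain ⟨tW, hwW⟩ := exists_tree (T.W i) (hW i)
  subst hfA
  subst hfB
  cases γ with
  | nil =>
    have hAmem : tA.toFml xhat ∈ codeSet xhat (i :: β) :=
      ⟨tA, by rw [hwA, hξ]; simp, rfl⟩
    have hBmem : tW.toFml xhat ∈ codeSet xhat (T.W i) := ⟨tW, hwW, rfl⟩
    have hax : Fml.Deriv (PT xhat T) (.imp (tA.toFml xhat) (tW.toFml xhat)) :=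
      Fml.Deriv.ax (Set.mem_union_left _
        ⟨i, β, tA.toFml xhat, tW.toFml xhat, hβ, hAmem, hBmem, Or.inr rfl⟩)
    refine (Relation.ReflTransGen.single hax).trans ?_
    exact sprel_chain xhat hx T (sprel_of_word_eq (by rw [hwW, hwB, hζ]; simp))
  | cons g γ' =>
    obtain ⟨tH, hwH⟩ := exists_tree (i :: β) (by simp)
    obtain ⟨tγ, hwγ⟩ := exists_tree (g :: γ') (by simp)
    have chain1 : DChain (PT xhat T) (tA.toFml xhat) ((ATree.node tH tγ).toFml xhat) :=
      sprel_chain xhat hx T (sprel_of_word_eq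
        (by simp only [ATree.word, hwH, hwγ, hwA, hξ]; simp))
    have hHmem : tH.toFml xhat ∈ codeSet xhat (i :: β) := ⟨tH, hwH, rfl⟩
    have hWmem : tW.toFml xhat ∈ codeSet xhat (T.W i) := ⟨tW, hwW, rfl⟩
    have hax : Fml.Deriv (PT xhat T)
        (.imp (dot xhat (tH.toFml xhat) Xv) (dot xhat Xv (tW.toFml xhat))) :=
      Fml.Deriv.ax (Set.mem_union_left _
        ⟨i, β, tH.toFml xhat, tW.toFml xhat, hβ, hHmem, hWmem, Or.inl rfl⟩)
    have hsub := Fml.Deriv.sub (fun n => if n = 1 then tγ.toFml xhat else .var n) hax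
    have hfixH : Fml.subst (fun n => if n = 1 then tγ.toFml xhat else .var n)
        (tH.toFml xhat) = tH.toFml xhat := by
      apply subst_fix
      intro n hn
      have := fvars_toFml xhat hx tH hn
      simp at this
      subst this
      simp
    have hfixW : Fml.subst (fun n => if n = 1 then tγ.toFml xhat else .var n)
        (tW.toFml xhat) = tW.toFml xhat := by
      apply subst_fix
      intro n hn
      have := fvars_toFml xhat hx tW hn
      simp at this
      subst this
      simp
    simp only [subst_imp, dot_subst xhat hx, hfixH, hfixW, Xv, subst_var] at hsub
    have himp : Fml.Deriv (PT xhat T)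
        (.imp (dot xhat (tH.toFml xhat) (tγ.toFml xhat))
          (dot xhat (tγ.toFml xhat) (tW.toFml xhat))) := by simpa using hsub
    have chain2 : DChain (PT xhat T) ((ATree.node tH tγ).toFml xhat)
        ((ATree.node tγ tW).toFml xhat) := Relation.ReflTransGen.single himp
    have chain3 : DChain (PT xhat T) ((ATree.node tγ tW).toFml xhat) (tB.toFml xhat) :=
      sprel_chain xhat hx T (sprel_of_word_eq
        (by simp only [ATree.word, hwγ, hwW, hwB, hζ]))
    exact chain1.trans (chain2.trans chain3)

end PC
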